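/- Let Q be a local probability weakly equivalent to P with localizing sequence (τ_n) and associated measures (ν_n), and let Y be the associated density process. Let X be a nonnegative process with deterministic initial value X_0 = x₀ whose stopped value X_σ is F_σ-measurable for every stopping time σ. Then X is a local Q-martingale along (τ_n) (i.e., ∫ X_{τ_n ∧ τ} dν_n = x₀ for every n and every stopping time τ) if and only if Y X is a local P-martingale along (τ_n) (i.e., E_P[Y_{τ_n ∧ τ} X_{τ_n ∧ τ}] = x₀ for every n and every stopping time τ). -/

import Mathlib

open MeasureTheory Filter
open scoped NNReal ENNReal

/-- Let `Q` be a local probability weakly equivalent to `P`, with localizing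
sequence `τ`, associated countably additive measures `ν n` on `F_{τ n}`, and associated
density process `Y` (so `Y_{τ n}` is a Radon–Nikodym density of `ν n` w.r.t. `P` on `F_{τ n}`
and satisfies the sampled martingale identity). Let `X` be a nonnegative process with
deterministic initial value `x₀` whose stopped values are measurable for the stopped
σ-algebras. Then `X` is a local `Q`-martingale along `τ` (i.e. `∫ X_{τ n ∧ σ} dν n = x₀` for
all `n` and all stopping times `σ`) if and only if `Y X` is a local `P`-martingale along `τ`
(i.e. `E_P [Y_{τ n ∧ σ} X_{τ n ∧ σ}] = x₀` for all `n` and all stopping times `σ`). -/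
theorem local_Q_martingale_iff_density_local_P_martingale
    {Ω : Type*} {m : MeasurableSpace Ω} (P : Measure Ω) [IsProbabilityMeasure P]
    (ℱ : Filtration ℝ≥0 m)
    (T : Ω → ℝ≥0) (hT : IsStoppingTime ℱ (fun ω => (T ω : WithTop ℝ≥0)))
    -- Q is a finitely additive probability, weakly absolutely continuous w.r.t. P:
    (Q : Set Ω → ℝ)
    (hQ01 : ∀ A : Set Ω, MeasurableSet[hT.measurableSpace] A → 0 ≤ Q A ∧ Q A ≤ 1)
    (hQempty : Q ∅ = 0) (hQuniv : Q Set.univ = 1)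
    (hQadd : ∀ A B : Set Ω, MeasurableSet[hT.measurableSpace] A →
      MeasurableSet[hT.measurableSpace] B → Disjoint A B → Q (A ∪ B) = Q A + Q B)
    (hQweak : ∀ A : Set Ω, MeasurableSet[hT.measurableSpace] A → P A = 0 → Q A = 0)
    -- τ is a localizing sequence for Q, with associated measures ν n on F_{τ n}:
    (τ : ℕ → Ω → ℝ≥0) (hτ : ∀ n, IsStoppingTime ℱ (fun ω => (τ n ω : WithTop ℝ≥0)))
    (hτmono : ∀ n, τ n ≤ τ (n + 1))
    (hτT : Tendsto (fun n => P {ω | T ω ≤ τ n ω}) atTop (nhds 1))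
    (ν : ∀ n : ℕ, @Measure Ω ((hτ n).measurableSpace))
    (hνQ : ∀ n, ∀ A : Set Ω, MeasurableSet[(hτ n).measurableSpace] A → Q A = (ν n A).toReal)
    (hνP : ∀ n, ∀ A : Set Ω, MeasurableSet[(hτ n).measurableSpace] A → (ν n A = 0 ↔ P A = 0))
    -- Y is the associated density process:
    (Y : ℝ≥0 → Ω → ℝ)
    (hYnonneg : ∀ t ω, 0 ≤ Y t ω)
    (hYadapted : Adapted ℱ Y)
    (hYstopmeas : ∀ n, Measurable[(hτ n).measurableSpace] fun ω => Y (τ n ω) ω)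
    (hYdensity : ∀ n, ∀ A : Set Ω, MeasurableSet[(hτ n).measurableSpace] A →
      ν n A = ∫⁻ ω in A, ENNReal.ofReal (Y (τ n ω) ω) ∂P)
    (hYmart : ∀ n, ∀ σ : Ω → ℝ≥0, ∀ hσ : IsStoppingTime ℱ (fun ω => (σ ω : WithTop ℝ≥0)),
      P[(fun ω => Y (τ n ω) ω) | ((hτ n).min hσ).measurableSpace]
        =ᵐ[P] fun ω => Y (min (τ n ω) (σ ω)) ω)
    -- X is a nonnegative process with deterministic initial value x₀,
    -- whose stopped value X_σ is F_σ-measurable for every stopping time σ: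
    (X : ℝ≥0 → Ω → ℝ) (x₀ : ℝ)
    (hXnonneg : ∀ t ω, 0 ≤ X t ω)
    (hX0 : ∀ ω, X 0 ω = x₀)
    (hXstopmeas : ∀ (σ : Ω → ℝ≥0) (hσ : IsStoppingTime ℱ (fun ω => (σ ω : WithTop ℝ≥0))),
      Measurable[hσ.measurableSpace] fun ω => X (σ ω) ω) :
    (∀ n, ∀ σ : Ω → ℝ≥0, IsStoppingTime ℱ (fun ω => (σ ω : WithTop ℝ≥0)) →
        ∫⁻ ω, ENNReal.ofReal (X (min (τ n ω) (σ ω)) ω) ∂(ν n) = ENNReal.ofReal x₀) ↔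
      (∀ n, ∀ σ : Ω → ℝ≥0, IsStoppingTime ℱ (fun ω => (σ ω : WithTop ℝ≥0)) →
        ∫⁻ ω, ENNReal.ofReal (Y (min (τ n ω) (σ ω)) ω * X (min (τ n ω) (σ ω)) ω) ∂P
          = ENNReal.ofReal x₀) := by
  have key : ∀ n, ∀ σ : Ω → ℝ≥0, ∀ hσ : IsStoppingTime ℱ (fun ω => (σ ω : WithTop ℝ≥0)),
      ∫⁻ ω, ENNReal.ofReal (X (min (τ n ω) (σ ω)) ω) ∂(ν n)
        = ∫⁻ ω, ENNReal.ofReal (Y (min (τ n ω) (σ ω)) ω * X (min (τ n ω) (σ ω)) ω) ∂P := by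
    intro n σ hσ
    -- notation
    set Yn : Ω → ℝ := fun ω => Y (τ n ω) ω with hYn_def
    set Yσ : Ω → ℝ := fun ω => Y (min (τ n ω) (σ ω)) ω with hYσ_def
    set Xσ : Ω → ℝ≥0∞ := fun ω => ENNReal.ofReal (X (min (τ n ω) (σ ω)) ω) with hXσ_def
    have heqmin : (fun ω => ((min (τ n ω) (σ ω) : ℝ≥0) : WithTop ℝ≥0))
        = fun ω => min ((τ n ω : WithTop ℝ≥0)) ((σ ω : WithTop ℝ≥0)) := by
      funext ω; simp [WithTop.coe_min]
    have hmin : IsStoppingTime ℱ fun ω => ((min (τ n ω) (σ ω) : ℝ≥0) : WithTop ℝ≥0) :=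
      heqmin ▸ (hτ n).min hσ
    have hms : ∀ (f g : Ω → WithTop ℝ≥0) (hf : IsStoppingTime ℱ f) (hg : IsStoppingTime ℱ g),
        f = g → hf.measurableSpace = hg.measurableSpace := by
      intro f g hf hg h; subst h; rfl
    have hGle_n : ((hτ n).min hσ).measurableSpace ≤ (hτ n).measurableSpace :=
      IsStoppingTime.measurableSpace_mono _ (hτ n) fun ω => min_le_left _ _
    have hn_le : (hτ n).measurableSpace ≤ m := (hτ n).measurableSpace_le
    have hG_le : ((hτ n).min hσ).measurableSpace ≤ m := hGle_n.trans hn_le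
    -- measurability of the ingredients
    have hYn_meas : Measurable[m] Yn := (hYstopmeas n).mono hn_le le_rfl
    have hXσ_measG : Measurable[((hτ n).min hσ).measurableSpace] Xσ :=
      hms _ _ hmin ((hτ n).min hσ) heqmin ▸ ENNReal.measurable_ofReal.comp (hXstopmeas _ hmin)
    have hXσ_meas : Measurable[m] Xσ := hXσ_measG.mono hG_le le_rfl
    -- ν n has finite total mass
    have hν_univ : ν n Set.univ ≠ ∞ := by
      intro h
      have := hνQ n Set.univ MeasurableSet.univ
      rw [hQuniv, h] at this
      simp at this
    -- Y_{τ n} is integrable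
    have hYn_lint : ∫⁻ ω, ENNReal.ofReal (Yn ω) ∂P = ν n Set.univ := by
      rw [hYdensity n Set.univ MeasurableSet.univ, setLIntegral_univ]
    have hYn_int : Integrable Yn P := by
      refine ⟨hYn_meas.aestronglyMeasurable, ?_⟩
      rw [hasFiniteIntegral_iff_ofReal (Eventually.of_forall fun ω => hYnonneg _ _)]
      rw [hYn_lint]
      exact lt_of_le_of_ne le_top hν_univ
    haveI : SigmaFinite (P.trim hG_le) := by
      haveI : IsFiniteMeasure (P.trim hG_le) := isFiniteMeasure_trim hG_le
      infer_instance
    -- conditional expectation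
    set Z : Ω → ℝ := P[Yn | ((hτ n).min hσ).measurableSpace] with hZ_def
    have hZYσ : Z =ᵐ[P] Yσ := hYmart n σ hσ
    have hZ_int : Integrable Z P := integrable_condExp
    have hZ_measG : Measurable[((hτ n).min hσ).measurableSpace] Z := stronglyMeasurable_condExp.measurable
    have hZ_meas : Measurable[m] Z := hZ_measG.mono hG_le le_rfl
    have hZ_nn : 0 ≤ᵐ[P] Z := hZYσ.mono fun ω h => h ▸ hYnonneg _ _
    -- the two densities integrate the same on G-sets
    have hsame : ∀ A : Set Ω, MeasurableSet[((hτ n).min hσ).measurableSpace] A →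
        ∫⁻ ω in A, ENNReal.ofReal (Z ω) ∂P = ∫⁻ ω in A, ENNReal.ofReal (Yn ω) ∂P := by
      intro A hA
      have hAm : MeasurableSet A := hG_le A hA
      rw [← ofReal_integral_eq_lintegral_ofReal (hZ_int.restrict (s := A))
          (ae_restrict_of_ae hZ_nn),
        ← ofReal_integral_eq_lintegral_ofReal (hYn_int.restrict (s := A))
          (ae_restrict_of_ae (Eventually.of_forall fun ω => hYnonneg _ _)),
        setIntegral_condExp hG_le hYn_int hA]
    -- withDensity measures
    set μ₁ : Measure Ω := P.withDensity fun ω => ENNReal.ofReal (Yn ω) with hμ₁_def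
    set μ₂ : Measure Ω := P.withDensity fun ω => ENNReal.ofReal (Z ω) with hμ₂_def
    have htrim : μ₁.trim hG_le = μ₂.trim hG_le := by
      refine @Measure.ext Ω ((hτ n).min hσ).measurableSpace _ _ fun A hA => ?_
      rw [trim_measurableSet_eq hG_le hA, trim_measurableSet_eq hG_le hA,
        hμ₁_def, hμ₂_def, withDensity_apply _ (hG_le A hA), withDensity_apply _ (hG_le A hA),
        hsame A hA]
    -- ν n equals μ₁ trimmed to F_{τ n}
    have hν_eq : ν n = μ₁.trim hn_le := by
      refine @Measure.ext Ω (hτ n).measurableSpace _ _ fun A hA => ?_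
      rw [trim_measurableSet_eq hn_le hA, hμ₁_def, withDensity_apply _ (hn_le A hA),
        hYdensity n A hA]
    -- chain of equalities
    have hXσ_measFn : Measurable[(hτ n).measurableSpace] Xσ := hXσ_measG.mono hGle_n le_rfl
    calc ∫⁻ ω, Xσ ω ∂(ν n) = ∫⁻ ω, Xσ ω ∂(μ₁.trim hn_le) := by rw [hν_eq]
      _ = ∫⁻ ω, Xσ ω ∂μ₁ := lintegral_trim hn_le hXσ_measFn
      _ = ∫⁻ ω, Xσ ω ∂(μ₁.trim hG_le) := (lintegral_trim hG_le hXσ_measG).symm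
      _ = ∫⁻ ω, Xσ ω ∂(μ₂.trim hG_le) := by rw [htrim]
      _ = ∫⁻ ω, Xσ ω ∂μ₂ := lintegral_trim hG_le hXσ_measG
      _ = ∫⁻ ω, ((fun ω => ENNReal.ofReal (Z ω)) * Xσ) ω ∂P :=
          lintegral_withDensity_eq_lintegral_mul P
            (ENNReal.measurable_ofReal.comp hZ_meas) hXσ_meas
      _ = ∫⁻ ω, ENNReal.ofReal (Yσ ω * X (min (τ n ω) (σ ω)) ω) ∂P := by
          refine lintegral_congr_ae (hZYσ.mono fun ω h => ?_)
          simp only [Pi.mul_apply, hXσ_def, h]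
          rw [ENNReal.ofReal_mul (hYnonneg _ _)]
  constructor
  · intro h n σ hσ
    rw [← key n σ hσ]
    exact h n σ hσ
  · intro h n σ hσ
    rw [key n σ hσ]
    exact h n σ hσ
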